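/- Let R be a commutative ring, a, b, x ∈ R, and n ≥ 1 a natural number. Then b·(x+a)ⁿ − a·(x+b)ⁿ = (b−a)·( xⁿ − ∑_{k=2}^{n} (n.choose k)·a·b·(∑_{j=0}^{k−2} aʲ·b^{k−2−j})·x^{n−k} ). -/
import Mathlib


/-- Bézout's 1762 equation (E): eliminating `y` between `yⁿ + h = 0` and
`y = (x+a)/(x+b)` with `h = −a/b` yields, as a polynomial identity,
`b·(x+a)ⁿ − a·(x+b)ⁿ = (b−a)·(xⁿ − ∑_{k=2}^{n} C(n,k)·ab·(a^{k−2} + a^{k−3}b + ⋯ + b^{k−2})·x^{n−k})`. -/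
theorem bezout_equation_E {R : Type*} [CommRing R] (a b x : R) (n : ℕ) (hn : 1 ≤ n) :
    b * (x + a) ^ n - a * (x + b) ^ n =
      (b - a) * (x ^ n - ∑ k ∈ Finset.Icc 2 n, (n.choose k : R) * (a * b) *
        (∑ j ∈ Finset.range (k - 1), a ^ j * b ^ (k - 2 - j)) * x ^ (n - k)) := by
  -- extend the sum on the RHS to `range (n+1)`: extra terms vanish
  have hsub : Finset.Icc 2 n ⊆ Finset.range (n + 1) := by
    intro k hk
    simp only [Finset.mem_Icc] at hk
    simp [Finset.mem_range]; omega
  have hext : ∑ k ∈ Finset.Icc 2 n, (n.choose k : R) * (a * b) *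
        (∑ j ∈ Finset.range (k - 1), a ^ j * b ^ (k - 2 - j)) * x ^ (n - k)
      = ∑ k ∈ Finset.range (n + 1), (n.choose k : R) * (a * b) *
        (∑ j ∈ Finset.range (k - 1), a ^ j * b ^ (k - 2 - j)) * x ^ (n - k) := by
    apply Finset.sum_subset hsub
    intro k hk hk'
    simp only [Finset.mem_range] at hk
    simp only [Finset.mem_Icc] at hk'
    have : k - 1 = 0 := by omega
    simp [this]
  rw [hext]
  -- expand the LHS via the binomial theorem (with index on a, b)
  have hA : (x + a) ^ n = ∑ k ∈ Finset.range (n + 1), a ^ k * x ^ (n - k) * n.choose k := by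
    rw [add_comm x a, add_pow]
  have hB : (x + b) ^ n = ∑ k ∈ Finset.range (n + 1), b ^ k * x ^ (n - k) * n.choose k := by
    rw [add_comm x b, add_pow]
  rw [hA, hB, Finset.mul_sum, Finset.mul_sum, ← Finset.sum_sub_distrib, mul_sub,
    Finset.mul_sum]
  -- realize `(b-a) * x^n` as the k = 0 term of an indicator sum
  have hx : (b - a) * x ^ n
      = ∑ k ∈ Finset.range (n + 1), (if k = 0 then (b - a) * x ^ n else 0) := by
    rw [Finset.sum_ite_eq' (Finset.range (n + 1)) 0 (fun _ => (b - a) * x ^ n)]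
    simp
  rw [hx, ← Finset.sum_sub_distrib]
  refine Finset.sum_congr rfl fun k hk => ?_
  rcases Nat.eq_zero_or_pos k with rfl | hkpos
  · simp; ring
  -- k ≥ 1 : use geometric sum identity
  have hgeo : (∑ j ∈ Finset.range (k - 1), a ^ j * b ^ (k - 1 - 1 - j)) * (a - b)
      = a ^ (k - 1) - b ^ (k - 1) := geom_sum₂_mul a b (k - 1)
  have hk1 : k - 1 - 1 = k - 2 := by omega
  rw [hk1] at hgeo
  have hsplit : a ^ k = a * a ^ (k - 1) := by
    conv_lhs => rw [show k = (k - 1) + 1 from by omega]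
    rw [pow_succ]; ring
  have hsplit' : b ^ k = b * b ^ (k - 1) := by
    conv_lhs => rw [show k = (k - 1) + 1 from by omega]
    rw [pow_succ]; ring
  have hne : k ≠ 0 := by omega
  simp only [if_neg hne, zero_sub]
  rw [hsplit, hsplit']
  -- reduce to a ring identity using hgeo
  linear_combination (-((n.choose k : R) * (a * b) * x ^ (n - k))) * hgeo
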